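/- Fix a finite set X of positive integers, let L = lcm(X), and let N_0 = max{F(X') : X' ⊆ X}, where F(X') is the largest multiple of gcd(X') that does not belong to Sg(X') (taken to be 0 if no such multiple exists). Then for every integer b > N_0 with b ∈ Sg(X), one has b + L ∈ Sg(X) and m_0(b + L) = m_0(b). -/

import Mathlib

/-- The numerical semigroup generated by the elements of `X`: all values of
nonnegative integer combinations of elements of `X`. -/
def SgN (X : Finset ℕ) : Set ℕ :=
  { b | ∃ lam : ℕ → ℕ, ∑ i ∈ X, lam i * i = b }

/-- `m0N X b` is the least number of nonzero coefficients in a representation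
of `b` as a nonnegative integer combination of the elements of `X`. -/
noncomputable def m0N (X : Finset ℕ) (b : ℕ) : ℕ :=
  sInf { k | ∃ lam : ℕ → ℕ, (∑ i ∈ X, lam i * i = b) ∧
    k = (X.filter fun i => lam i ≠ 0).card }

/-- The generalized Frobenius number of a finite set `Y` of positive integers:
the largest multiple of `gcd(Y)` not representable as a nonnegative integer
combination of `Y` (taken as `0` if no such multiple exists). -/
noncomputable def FrobGen (Y : Finset ℕ) : ℕ :=
  sSup { n | Y.gcd id ∣ n ∧ n ∉ SgN Y }

lemma sgn_zero (X : Finset ℕ) : 0 ∈ SgN X := ⟨fun _ => 0, by simp⟩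

lemma sgn_add {X : Finset ℕ} {a b : ℕ} (ha : a ∈ SgN X) (hb : b ∈ SgN X) :
    a + b ∈ SgN X := by
  obtain ⟨f, hf⟩ := ha; obtain ⟨g, hg⟩ := hb
  exact ⟨fun i => f i + g i, by simp [add_mul, Finset.sum_add_distrib, hf, hg]⟩

lemma sgn_nsmul {X : Finset ℕ} {a : ℕ} (k : ℕ) (ha : a ∈ SgN X) : k * a ∈ SgN X := by
  obtain ⟨f, hf⟩ := ha
  exact ⟨fun i => k * f i, by rw [← hf, Finset.mul_sum]; simp [mul_assoc]⟩

lemma sgn_mem {X : Finset ℕ} {x : ℕ} (hx : x ∈ X) : x ∈ SgN X := by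
  classical
  exact ⟨fun i => if i = x then 1 else 0, by simp [ite_mul, hx]⟩

lemma sgn_mono {S X : Finset ℕ} (hS : S ⊆ X) : SgN S ⊆ SgN X := by
  classical
  rintro b ⟨f, hf⟩
  refine ⟨fun i => if i ∈ S then f i else 0, ?_⟩
  rw [← Finset.sum_subset hS (fun x _ hx => by simp [hx])]
  rw [← hf]
  exact Finset.sum_congr rfl fun i hi => by simp [hi]

lemma gcd_dvd_sgn {S : Finset ℕ} {b : ℕ} (hb : b ∈ SgN S) : S.gcd id ∣ b := by
  obtain ⟨f, hf⟩ := hb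
  rw [← hf]
  exact Finset.dvd_sum fun i hi => Dvd.dvd.mul_left (Finset.gcd_dvd hi) _

lemma sgn_bezout (S : Finset ℕ) : ∃ u v, u ∈ SgN S ∧ v ∈ SgN S ∧ u = v + S.gcd id := by
  classical
  induction S using Finset.induction_on with
  | empty => exact ⟨0, 0, sgn_zero _, sgn_zero _, by simp⟩
  | insert _ _ ha ih =>
    rename_i a S
    obtain ⟨u, v, hu, hv, huv⟩ := ih
    set g := S.gcd id with hg
    have hgcd : (insert a S).gcd id = Nat.gcd a g := by
      rw [Finset.gcd_insert]; rfl
    set p := Nat.gcdA a g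
    set q := Nat.gcdB a g
    have hbez : (Nat.gcd a g : ℤ) = a * p + g * q := Nat.gcd_eq_gcd_ab a g
    have hsub : SgN S ⊆ SgN (insert a S) := sgn_mono (Finset.subset_insert a S)
    have haM : a ∈ SgN (insert a S) := sgn_mem (Finset.mem_insert_self a S)
    refine ⟨p.toNat * a + (q.toNat * u + (-q).toNat * v),
            (-p).toNat * a + (q.toNat * v + (-q).toNat * u), ?_, ?_, ?_⟩
    · exact sgn_add (sgn_nsmul _ haM) (sgn_add (sgn_nsmul _ (hsub hu)) (sgn_nsmul _ (hsub hv)))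
    · exact sgn_add (sgn_nsmul _ haM) (sgn_add (sgn_nsmul _ (hsub hv)) (sgn_nsmul _ (hsub hu)))
    · rw [hgcd]
      have h1 : ((p.toNat : ℤ)) = p + (-p).toNat := by omega
      have h2 : ((q.toNat : ℤ)) = q + (-q).toNat := by omega
      have huv' : (u : ℤ) = v + g := by exact_mod_cast huv
      have key : ((p.toNat * a + (q.toNat * u + (-q).toNat * v) : ℕ) : ℤ)
          = (((-p).toNat * a + (q.toNat * v + (-q).toNat * u) : ℕ) : ℤ) + (Nat.gcd a g : ℤ) := by
        push_cast
        rw [hbez, h1, h2, huv']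
        ring
      exact_mod_cast key

lemma sgn_large (S : Finset ℕ) : ∃ C, ∀ n, S.gcd id ∣ n → C ≤ n → n ∈ SgN S := by
  obtain ⟨u, v, hu, hv, huv⟩ := sgn_bezout S
  set d := S.gcd id with hd
  refine ⟨v * v + 1, fun n hdn hCn => ?_⟩
  rcases Nat.eq_zero_or_pos d with hd0 | hd0
  · obtain rfl : n = 0 := by simpa [hd0] using hdn
    exact sgn_zero S
  obtain ⟨v', rfl⟩ : d ∣ v := gcd_dvd_sgn hv
  obtain ⟨m, rfl⟩ := hdn
  rcases Nat.eq_zero_or_pos v' with hv' | hv'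
  · subst hv'
    have hud : u = d := by simpa using huv
    have : m * u ∈ SgN S := sgn_nsmul m hu
    rwa [hud, mul_comm] at this
  · set q := m / v' with hq
    set r := m % v' with hrdef
    have hr : r < v' := Nat.mod_lt _ hv'
    have hm : v' * v' ≤ m := by
      have h1 : d * (v' * v') ≤ d * v' * (d * v') := by nlinarith
      have h2 : d * (v' * v') < d * m := by omega
      exact le_of_lt (Nat.lt_of_mul_lt_mul_left h2)
    have hvq : v' ≤ q := (Nat.le_div_iff_mul_le hv').mpr hm
    have hrq : r ≤ q := le_of_lt (lt_of_lt_of_le hr hvq)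
    obtain ⟨t, ht⟩ : ∃ t, q = r + t := ⟨q - r, by omega⟩
    have hmem : t * (d * v') + r * u ∈ SgN S := sgn_add (sgn_nsmul _ hv) (sgn_nsmul _ hu)
    have hdm : v' * q + r = m := Nat.div_add_mod m v'
    have : d * m = t * (d * v') + r * u := by
      rw [huv, ← hdm, ht]
      ring
    rwa [this]

/-- **Theorem 4 (first part).** Fix a finite set `X` of positive integers, let
`L = lcm(X)` and `N₀ = max {F(X') : X' ⊆ X}`.  Then every `b > N₀` in `Sg(X)`
satisfies `b + L ∈ Sg(X)` and `m₀(b + L) = m₀(b)`. -/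
theorem m0_eventually_periodic (X : Finset ℕ) (hpos : ∀ n ∈ X, 0 < n)
    (L : ℕ) (hL : L = X.lcm id)
    (N0 : ℕ) (hN0 : N0 = X.powerset.sup FrobGen)
    (b : ℕ) (hb : N0 < b) (hbS : b ∈ SgN X) :
    b + L ∈ SgN X ∧ m0N X (b + L) = m0N X b := by
  classical
  have hb0 : 0 < b := lt_of_le_of_lt (Nat.zero_le _) hb
  -- key: for any S ⊆ X with gcd S ∣ b, we have b ∈ SgN S
  have key : ∀ S : Finset ℕ, S ⊆ X → S.gcd id ∣ b → b ∈ SgN S := by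
    intro S hS hdb
    by_contra hbS'
    obtain ⟨C, hC⟩ := sgn_large S
    have hbdd : BddAbove {n | S.gcd id ∣ n ∧ n ∉ SgN S} := by
      refine ⟨C, fun n hn => ?_⟩
      by_contra h
      push_neg at h
      exact hn.2 (hC n hn.1 h.le)
    have h1 : b ≤ FrobGen S := le_csSup hbdd ⟨hdb, hbS'⟩
    have h2 : FrobGen S ≤ N0 := hN0 ▸ Finset.le_sup (Finset.mem_powerset.mpr hS)
    omega
  -- choose an optimal representation of b
  have hbne : {k | ∃ lam : ℕ → ℕ, (∑ i ∈ X, lam i * i = b) ∧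
      k = (X.filter fun i => lam i ≠ 0).card}.Nonempty := by
    obtain ⟨lam, hlam⟩ := hbS
    exact ⟨_, lam, hlam, rfl⟩
  obtain ⟨lam, hlam, hcard⟩ := Nat.sInf_mem hbne
  obtain ⟨x, hxX, hxne⟩ : ∃ x ∈ X, lam x ≠ 0 := by
    by_contra h
    push_neg at h
    have h0 : ∑ i ∈ X, lam i * i = 0 := Finset.sum_eq_zero fun i hi => by simp [h i hi]
    rw [h0] at hlam
    exact hb0.ne' hlam.symm
  have hxL : x ∣ L := by rw [hL]; exact Finset.dvd_lcm hxX
  set lam' : ℕ → ℕ := fun i => if i = x then lam i + L / x else lam i with hlamdef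
  have hsum' : ∑ i ∈ X, lam' i * i = b + L := by
    have hcong : ∀ i ∈ X, lam' i * i = lam i * i + (if i = x then (L / x) * x else 0) := by
      intro i _
      by_cases h : i = x <;> simp [lam', h, add_mul]
    rw [Finset.sum_congr rfl hcong, Finset.sum_add_distrib, hlam, Finset.sum_ite_eq' X x,
      if_pos hxX, Nat.div_mul_cancel hxL]
  have hsupp : (X.filter fun i => lam' i ≠ 0) = (X.filter fun i => lam i ≠ 0) := by
    apply Finset.filter_congr
    intro i _
    by_cases h : i = x
    · subst h
      simp only [lam', if_pos rfl]
      exact ⟨fun _ => hxne, fun _ h0 => hxne (Nat.add_eq_zero.mp h0).1⟩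
    · simp [lam', h]
  have hmem1 : b + L ∈ SgN X := ⟨lam', hsum'⟩
  refine ⟨hmem1, le_antisymm ?_ ?_⟩
  · -- m0 (b+L) ≤ m0 b
    have h1 : m0N X (b + L) ≤ (X.filter fun i => lam' i ≠ 0).card := by
      unfold m0N; exact Nat.sInf_le ⟨lam', hsum', rfl⟩
    rw [hsupp] at h1
    have h2 : m0N X b = (X.filter fun i => lam i ≠ 0).card := by
      unfold m0N; exact hcard
    rw [h2]; exact h1
  · -- m0 b ≤ m0 (b+L)
    have hbLne : {k | ∃ mu : ℕ → ℕ, (∑ i ∈ X, mu i * i = b + L) ∧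
        k = (X.filter fun i => mu i ≠ 0).card}.Nonempty := by
      obtain ⟨mu, hmu⟩ := hmem1
      exact ⟨_, mu, hmu, rfl⟩
    obtain ⟨mu, hmu, hmucard⟩ := Nat.sInf_mem hbLne
    set S := X.filter fun i => mu i ≠ 0 with hSdef
    have hSsub : S ⊆ X := Finset.filter_subset _ _
    have hbLS : b + L ∈ SgN S := by
      refine ⟨mu, ?_⟩
      rw [← hmu]
      exact Finset.sum_filter_of_ne fun i _ h => by
        intro h0
        exact h (by rw [h0]; ring)
    obtain ⟨s, hsS⟩ : S.Nonempty := by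
      rw [Finset.nonempty_iff_ne_empty]
      intro hSe
      have : ∑ i ∈ X, mu i * i = 0 := Finset.sum_eq_zero fun i hi => by
        have : mu i = 0 := by
          by_contra hne
          have : i ∈ S := Finset.mem_filter.mpr ⟨hi, hne⟩
          simp [hSe] at this
        simp [this]
      rw [this] at hmu
      exact (Nat.add_pos_left hb0 L).ne' hmu.symm
    have hdL : S.gcd id ∣ L := by
      refine dvd_trans (Finset.gcd_dvd hsS) ?_
      rw [hL]
      exact Finset.dvd_lcm (hSsub hsS)
    have hdb : S.gcd id ∣ b := by
      have h1 : S.gcd id ∣ b + L := gcd_dvd_sgn hbLS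
      have := Nat.dvd_sub h1 hdL
      simpa using this
    obtain ⟨nu, hnu⟩ := key S hSsub hdb
    set nu' : ℕ → ℕ := fun i => if i ∈ S then nu i else 0 with hnudef
    have hnusum : ∑ i ∈ X, nu' i * i = b := by
      rw [← Finset.sum_subset hSsub (fun i _ hi => by simp [nu', hi]), ← hnu]
      exact Finset.sum_congr rfl fun i hi => by simp [nu', hi]
    have hfsub : (X.filter fun i => nu' i ≠ 0) ⊆ S := by
      intro i hi
      obtain ⟨hiX, hine⟩ := Finset.mem_filter.mp hi
      by_contra hiS
      simp [nu', hiS] at hine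
    have h1 : m0N X b ≤ (X.filter fun i => nu' i ≠ 0).card := by
      unfold m0N; exact Nat.sInf_le ⟨nu', hnusum, rfl⟩
    have h2 : (X.filter fun i => nu' i ≠ 0).card ≤ S.card := Finset.card_le_card hfsub
    have h3 : m0N X (b + L) = S.card := by
      unfold m0N; exact hmucard
    rw [h3]
    exact le_trans h1 h2
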